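/- Let N ∈ ℕ, t_j = −1 + (j−2)/N for j = 1,…,2N+3, and ℓ ∈ ℕ with ℓ ≥ 1. Define v^{[ℓ]} = 𝓛_N((t_k^ℓ)_{k=2}^{2N+2}) ∈ ℝ^{2N+3}. Then sup_{u ∈ [−1,1]} | N Σ_{j=1}^{2N+3} v^{[ℓ]}_j σ(u − t_j) − u^ℓ | ≤ 2ℓ/N, where σ(u) = max(u,0). -/
import Mathlib


open Finset

/-- ReLU activation. -/
noncomputable def relu (u : ℝ) : ℝ := max u 0

/-- The knots `t_j = -1 + (j-2)/N` (with `j` 1-based, `j = 1, …, 2N+3`). -/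
noncomputable def knot (N j : ℕ) : ℝ := -1 + ((j : ℝ) - 2) / (N : ℝ)

/-- The linear operator `𝓛_N : ℝ^{2N+1} → ℝ^{2N+3}` (second order difference operator),
acting on families indexed by `2, …, 2N+2` and producing entries indexed by `1, …, 2N+3`. -/
noncomputable def Lop (N : ℕ) (ζ : ℕ → ℝ) (i : ℕ) : ℝ :=
  if i = 1 then ζ 2
  else if i = 2 then ζ 3 - 2 * ζ 2
  else if i ≤ 2 * N + 1 then ζ (i - 1) - 2 * ζ i + ζ (i + 1)
  else if i = 2 * N + 2 then ζ (2 * N + 1) - 2 * ζ (2 * N + 2)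
  else ζ (2 * N + 2)

lemma pow_lip (x y : ℝ) (hx : |x| ≤ 1) (hy : |y| ≤ 1) (n : ℕ) :
    |x ^ n - y ^ n| ≤ n * |x - y| := by
  rw [← geom_sum₂_mul, abs_mul]
  have h1 : |∑ i ∈ range n, x ^ i * y ^ (n - 1 - i)| ≤ n := by
    calc |∑ i ∈ range n, x ^ i * y ^ (n - 1 - i)|
        ≤ ∑ i ∈ range n, |x ^ i * y ^ (n - 1 - i)| := Finset.abs_sum_le_sum_abs _ _
      _ ≤ ∑ i ∈ range n, 1 := by
          apply Finset.sum_le_sum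
          intro i _
          rw [abs_mul, abs_pow, abs_pow]
          exact mul_le_one₀ (pow_le_one₀ (abs_nonneg _) hx) (pow_nonneg (abs_nonneg _) _)
            (pow_le_one₀ (abs_nonneg _) hy)
      _ = n := by simp
  gcongr

lemma Lop_interior (N : ℕ) (ζ : ℕ → ℝ) (i : ℕ) (h3 : 3 ≤ i) (hi : i ≤ 2 * N + 1) :
    Lop N ζ i = ζ (i - 1) - 2 * ζ i + ζ (i + 1) := by
  unfold Lop
  rw [if_neg (by omega), if_neg (by omega), if_pos hi]

lemma sum_Lop (N : ℕ) (ζ : ℕ → ℝ) (m : ℕ) (h2 : 2 ≤ m) (hm : m ≤ 2 * N + 1) :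
    ∑ j ∈ Icc 1 m, Lop N ζ j = ζ (m + 1) - ζ m := by
  induction m, h2 using Nat.le_induction with
  | base =>
    rw [show Icc 1 2 = {1, 2} from rfl]
    rw [Finset.sum_insert (by decide), Finset.sum_singleton]
    unfold Lop
    norm_num
    ring
  | succ m hm2 ih =>
    rw [Finset.sum_Icc_succ_top (by omega), ih (by omega),
      Lop_interior N ζ (m+1) (by omega) hm]
    simp only [Nat.add_sub_cancel]
    ring

lemma knot_succ (N j : ℕ) (hN : 1 ≤ N) : knot N (j + 1) = knot N j + 1 / N := by
  unfold knot
  have : (N:ℝ) ≠ 0 := by positivity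
  push_cast
  field_simp
  ring

lemma knot_mono (N : ℕ) (hN : 1 ≤ N) {a b : ℕ} (hab : a ≤ b) : knot N a ≤ knot N b := by
  unfold knot
  have hNr : (0:ℝ) < N := by positivity
  have : ((a:ℝ) - 2) / N ≤ ((b:ℝ) - 2) / N := by
    gcongr
  linarith

lemma sum_Lop_knot (N : ℕ) (hN : 1 ≤ N) (ζ : ℕ → ℝ) (m : ℕ) (h2 : 2 ≤ m) (hm : m ≤ 2 * N + 1) :
    ∑ j ∈ Icc 1 m, Lop N ζ j * knot N j
      = knot N m * (ζ (m + 1) - ζ m) - ζ m / N := by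
  have hNr : (N:ℝ) ≠ 0 := by positivity
  induction m, h2 using Nat.le_induction with
  | base =>
    rw [show Icc 1 2 = {1, 2} from rfl]
    rw [Finset.sum_insert (by decide), Finset.sum_singleton]
    unfold Lop
    norm_num
    unfold knot
    field_simp
    ring
  | succ m hm2 ih =>
    rw [Finset.sum_Icc_succ_top (by omega), ih (by omega),
      Lop_interior N ζ (m+1) (by omega) hm, knot_succ N m hN]
    simp only [Nat.add_sub_cancel]
    field_simp
    ring


/-- Approximation of the monomial `u^ℓ` by the spline combination
`N Σ_j v^{[ℓ]}_j σ(u − t_j)` with `v^{[ℓ]} = 𝓛_N((t_k^ℓ)_k)`, with rate `2ℓ/N`. -/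
theorem monomial_spline_approx (N ℓ : ℕ) (hN : 1 ≤ N) (hℓ : 1 ≤ ℓ) :
    ∀ u ∈ Set.Icc (-1 : ℝ) 1,
      |(N : ℝ) * (∑ j ∈ Finset.Icc 1 (2 * N + 3),
          Lop N (fun k => knot N k ^ ℓ) j * relu (u - knot N j)) - u ^ ℓ|
        ≤ 2 * (ℓ : ℝ) / (N : ℝ) := by
  intro u hu
  obtain ⟨hu1, hu2⟩ := hu
  have hNr : (0:ℝ) < N := by exact_mod_cast hN
  set ζ : ℕ → ℝ := fun k => knot N k ^ ℓ with hζ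
  set k := min (Nat.floor ((N:ℝ) * (u + 1))) (2 * N - 1) with hkdef
  set m := k + 2 with hmdef
  have hm2 : 2 ≤ m := by omega
  have hm : m ≤ 2 * N + 1 := by omega
  have hknotm : knot N m = -1 + (k:ℝ) / N := by
    rw [hmdef]; unfold knot; push_cast; ring_nf
  have hknotm1 : knot N (m + 1) = -1 + ((k:ℝ) + 1) / N := by
    rw [hmdef]; unfold knot; push_cast; ring_nf
  have hfl : (k:ℝ) ≤ (N:ℝ) * (u + 1) := by
    have h0 : (0:ℝ) ≤ (N:ℝ) * (u + 1) := by nlinarith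
    have h1 := Nat.floor_le h0
    have h2 : (k:ℝ) ≤ (Nat.floor ((N:ℝ) * (u + 1)) : ℝ) := by
      exact_mod_cast min_le_left _ _
    linarith
  have hfl2 : (N:ℝ) * (u + 1) ≤ (k:ℝ) + 1 := by
    rcases le_or_gt (Nat.floor ((N:ℝ) * (u + 1))) (2 * N - 1) with h | h
    · have hke : k = Nat.floor ((N:ℝ) * (u + 1)) := min_eq_left h
      rw [hke]
      exact (Nat.lt_floor_add_one _).le
    · have hke : k = 2 * N - 1 := min_eq_right h.le
      have hkc : (k:ℝ) = 2 * N - 1 := by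
        rw [hke]; push_cast [Nat.cast_sub (by omega : 1 ≤ 2 * N)]; ring
      rw [hkc]; nlinarith
  have htm : knot N m ≤ u := by
    rw [hknotm]
    have : (k:ℝ) / N ≤ u + 1 := by rw [div_le_iff₀ hNr]; nlinarith
    linarith
  have htm1 : u ≤ knot N (m + 1) := by
    rw [hknotm1]
    have : u + 1 ≤ ((k:ℝ) + 1) / N := by rw [le_div_iff₀ hNr]; nlinarith
    linarith
  have hsucc : knot N (m + 1) = knot N m + 1 / N := knot_succ N m hN
  have hkle : (k:ℝ) ≤ 2 * N - 1 := by
    have := min_le_right (Nat.floor ((N:ℝ) * (u + 1))) (2 * N - 1)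
    have : (k:ℝ) ≤ ((2 * N - 1 : ℕ) : ℝ) := by exact_mod_cast this
    rwa [Nat.cast_sub (by omega : 1 ≤ 2 * N), Nat.cast_mul, Nat.cast_ofNat, Nat.cast_one] at this
  have hk0 : (0:ℝ) ≤ (k:ℝ) := Nat.cast_nonneg k
  have hbm : |knot N m| ≤ 1 := by
    rw [hknotm, abs_le]
    constructor
    · have : (0:ℝ) ≤ (k:ℝ) / N := by positivity
      linarith
    · have : (k:ℝ) / N ≤ 2 := by rw [div_le_iff₀ hNr]; nlinarith
      linarith
  have hbm1 : |knot N (m + 1)| ≤ 1 := by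
    rw [hknotm1, abs_le]
    constructor
    · have : (0:ℝ) ≤ ((k:ℝ) + 1) / N := by positivity
      linarith
    · have : ((k:ℝ) + 1) / N ≤ 2 := by rw [div_le_iff₀ hNr]; nlinarith
      linarith
  have hbu : |u| ≤ 1 := abs_le.mpr ⟨hu1, hu2⟩
  -- split the sum
  have hsum : ∑ j ∈ Icc 1 (2 * N + 3), Lop N ζ j * relu (u - knot N j)
      = ∑ j ∈ Icc 1 m, Lop N ζ j * (u - knot N j) := by
    have hzero : ∑ j ∈ Ioc m (2 * N + 3), Lop N ζ j * relu (u - knot N j) = 0 := by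
      apply Finset.sum_eq_zero
      intro j hj
      have hj' := Finset.mem_Ioc.mp hj
      have : u ≤ knot N j := le_trans htm1 (knot_mono N hN (by omega))
      have : relu (u - knot N j) = 0 := max_eq_right (by linarith)
      rw [this, mul_zero]
    have hcons := Finset.sum_Ioc_consecutive
      (fun j => Lop N ζ j * relu (u - knot N j)) (Nat.zero_le m) (by omega : m ≤ 2 * N + 3)
    rw [show Icc 1 (2 * N + 3) = Ioc 0 (2 * N + 3) from (Finset.Icc_add_one_left_eq_Ioc 0 _),
      ← hcons, hzero, add_zero, ← Finset.Icc_add_one_left_eq_Ioc]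
    apply Finset.sum_congr rfl
    intro j hj
    have hj' := Finset.mem_Icc.mp hj
    have : knot N j ≤ u := le_trans (knot_mono N hN hj'.2) htm
    show Lop N ζ j * relu (u - knot N j) = Lop N ζ j * (u - knot N j)
    unfold relu
    rw [max_eq_left (show (0:ℝ) ≤ u - knot N j by linarith)]
  rw [hsum]
  have hexp : ∑ j ∈ Icc 1 m, Lop N ζ j * (u - knot N j)
      = (∑ j ∈ Icc 1 m, Lop N ζ j) * u - ∑ j ∈ Icc 1 m, Lop N ζ j * knot N j := by
    rw [Finset.sum_mul, ← Finset.sum_sub_distrib]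
    apply Finset.sum_congr rfl
    intro j _
    ring
  rw [hexp, sum_Lop N ζ m hm2 hm, sum_Lop_knot N hN ζ m hm2 hm]
  set lam : ℝ := (N:ℝ) * (u - knot N m) with hlamdef
  have hlam0 : 0 ≤ lam := mul_nonneg hNr.le (by linarith)
  have hlam1 : lam ≤ 1 := by
    have : u - knot N m ≤ 1 / N := by
      have := htm1; rw [hsucc] at this; linarith
    calc lam ≤ (N:ℝ) * (1 / N) := by
          rw [hlamdef]; exact mul_le_mul_of_nonneg_left this hNr.le
      _ = 1 := by field_simp
  have key : (N:ℝ) * ((ζ (m + 1) - ζ m) * u - (knot N m * (ζ (m + 1) - ζ m) - ζ m / N)) - u ^ ℓ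
      = (1 - lam) * (ζ m - u ^ ℓ) + lam * (ζ (m + 1) - u ^ ℓ) := by
    rw [hlamdef]
    field_simp
    ring
  rw [key]
  -- bounds on interpolation errors
  have e1 : |knot N m - u| ≤ 1 / N := by
    rw [abs_sub_comm, abs_of_nonneg (by linarith)]
    have := htm1; rw [hsucc] at this; linarith
  have e2 : |knot N (m + 1) - u| ≤ 1 / N := by
    rw [abs_of_nonneg (by linarith)]
    rw [hsucc]; linarith
  have b1 : |ζ m - u ^ ℓ| ≤ (ℓ:ℝ) / N := by
    calc |ζ m - u ^ ℓ| ≤ (ℓ:ℝ) * |knot N m - u| := pow_lip (knot N m) u hbm hbu ℓ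
      _ ≤ (ℓ:ℝ) * (1 / N) := by gcongr
      _ = (ℓ:ℝ) / N := by ring
  have b2 : |ζ (m + 1) - u ^ ℓ| ≤ (ℓ:ℝ) / N := by
    calc |ζ (m + 1) - u ^ ℓ| ≤ (ℓ:ℝ) * |knot N (m + 1) - u| := pow_lip _ u hbm1 hbu ℓ
      _ ≤ (ℓ:ℝ) * (1 / N) := by gcongr
      _ = (ℓ:ℝ) / N := by ring
  calc |(1 - lam) * (ζ m - u ^ ℓ) + lam * (ζ (m + 1) - u ^ ℓ)|
      ≤ |(1 - lam) * (ζ m - u ^ ℓ)| + |lam * (ζ (m + 1) - u ^ ℓ)| := abs_add_le _ _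
    _ = (1 - lam) * |ζ m - u ^ ℓ| + lam * |ζ (m + 1) - u ^ ℓ| := by
        rw [abs_mul, abs_mul, abs_of_nonneg (by linarith), abs_of_nonneg hlam0]
    _ ≤ (1 - lam) * ((ℓ:ℝ) / N) + lam * ((ℓ:ℝ) / N) := by
        apply add_le_add
        · exact mul_le_mul_of_nonneg_left b1 (by linarith)
        · exact mul_le_mul_of_nonneg_left b2 hlam0
    _ = (ℓ:ℝ) / N := by ring
    _ ≤ 2 * (ℓ:ℝ) / N := by
        have h0 : (0:ℝ) ≤ (ℓ:ℝ) := Nat.cast_nonneg ℓ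
        gcongr
        linarith
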